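/- Let J, B ∈ ℝ and consider the transverse-field Ising Hamiltonian H_TFIM := −J Σ_{k=1}^{L−1} σ^x_k σ^x_{k+1} − B Σ_{k=1}^{L} σ^z_k on (ℂ²)^{⊗L}. Define the antisymmetric matrix A(J,B) ∈ ℝ^{2L×2L} whose only nonzero entries are A(J,B)_{2k−1,2k} = 2B = −A(J,B)_{2k,2k−1} for k = 1, …, L and A(J,B)_{2k,2k+1} = 2J = −A(J,B)_{2k+1,2k} for k = 1, …, L−1. Then, with the Jordan–Wigner Majorana matrices, H_TFIM = (i/4) Σ_{j,k=1}^{2L} A(J,B)_{j,k} m_j m_k. -/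

import Mathlib

open Matrix

noncomputable section

def pauliX : Matrix (Fin 2) (Fin 2) ℂ := !![0, 1; 1, 0]
def pauliY : Matrix (Fin 2) (Fin 2) ℂ := !![0, -Complex.I; Complex.I, 0]
def pauliZ : Matrix (Fin 2) (Fin 2) ℂ := !![1, 0; 0, -1]

def pauliAt (L : ℕ) (σ : Matrix (Fin 2) (Fin 2) ℂ) (k : Fin L) :
    Matrix (Fin L → Fin 2) (Fin L → Fin 2) ℂ :=
  fun ν μ => ∏ j, if j = k then σ (ν j) (μ j) else (if ν j = μ j then 1 else 0)

lemma pauliZ_apply (a b : Fin 2) :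
    pauliZ a b = if a = b then (-1 : ℂ) ^ ((a : ℕ)) else 0 := by
  fin_cases a <;> fin_cases b <;> simp [pauliZ]

lemma pauliAt_Z_diagonal (L : ℕ) (k : Fin L) :
    pauliAt L pauliZ k = Matrix.diagonal (fun ν => (-1 : ℂ) ^ ((ν k : ℕ))) := by
  ext ν μ
  by_cases h : ν = μ
  · subst h
    simp only [pauliAt, Matrix.diagonal_apply_eq, eq_self_iff_true, if_true]
    calc (∏ j, if j = k then pauliZ (ν j) (ν j) else 1)
        = pauliZ (ν k) (ν k) := by
          rw [Finset.prod_ite_eq' Finset.univ k (fun j => pauliZ (ν j) (ν j))]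
          simp
      _ = (-1 : ℂ) ^ ((ν k : ℕ)) := by rw [pauliZ_apply, if_pos rfl]
  · rw [Matrix.diagonal_apply_ne _ h]
    obtain ⟨j₀, hj₀⟩ := Function.ne_iff.mp h
    refine Finset.prod_eq_zero (Finset.mem_univ j₀) ?_
    by_cases hjk : j₀ = k
    · rw [if_pos hjk, pauliZ_apply, if_neg hj₀]
    · simp [hjk, hj₀]

lemma pauliAt_Z_commute (L : ℕ) (j k : Fin L) :
    Commute (pauliAt L pauliZ j) (pauliAt L pauliZ k) := by
  rw [pauliAt_Z_diagonal, pauliAt_Z_diagonal]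
  unfold Commute SemiconjBy
  rw [Matrix.diagonal_mul_diagonal, Matrix.diagonal_mul_diagonal]
  exact congrArg _ (funext fun i => mul_comm _ _)

/-- The Jordan–Wigner string `∏_{j<k} σ^z_j`. -/
def zString (L : ℕ) (k : Fin L) : Matrix (Fin L → Fin 2) (Fin L → Fin 2) ℂ :=
  Finset.noncommProd (Finset.univ.filter (· < k)) (fun j => pauliAt L pauliZ j)
    (fun a _ b _ _ => pauliAt_Z_commute L a b)

/-- The odd Jordan–Wigner Majorana operator `m_{2k-1} = (∏_{j<k} σ^z_j) σ^x_k`. -/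
def jwOdd (L : ℕ) (k : Fin L) : Matrix (Fin L → Fin 2) (Fin L → Fin 2) ℂ :=
  zString L k * pauliAt L pauliX k

/-- The even Jordan–Wigner Majorana operator `m_{2k} = (∏_{j<k} σ^z_j) σ^y_k`. -/
def jwEven (L : ℕ) (k : Fin L) : Matrix (Fin L → Fin 2) (Fin L → Fin 2) ℂ :=
  zString L k * pauliAt L pauliY k


/-- The full family of Jordan–Wigner Majorana operators, indexed by `Fin L × Fin 2`:
the pair `(k, 0)` stands for `m_{2k-1}` and `(k, 1)` for `m_{2k}`. -/
def jw (L : ℕ) (p : Fin L × Fin 2) : Matrix (Fin L → Fin 2) (Fin L → Fin 2) ℂ :=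
  if p.2 = 0 then jwOdd L p.1 else jwEven L p.1

/-- The coupling matrix `A(J,B)` of the transverse-field Ising model: its only nonzero
entries are `A_{2k−1,2k} = 2B = −A_{2k,2k−1}` (`k = 1, …, L`) and
`A_{2k,2k+1} = 2J = −A_{2k+1,2k}` (`k = 1, …, L−1`), in the indexing where
`(k, 0)` stands for the Majorana index `2k−1` and `(k, 1)` for `2k`. -/
def isingCoupling (L : ℕ) (J B : ℝ) : Matrix (Fin L × Fin 2) (Fin L × Fin 2) ℝ :=
  (∑ k : Fin L,
      (Matrix.single (k, 0) (k, 1) (2 * B)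
        - Matrix.single (k, 1) (k, 0) (2 * B)))
  + ∑ k : Fin (L - 1),
      (Matrix.single (⟨k.1, by have := k.2; omega⟩, 1) (⟨k.1 + 1, by have := k.2; omega⟩, 0) (2 * J)
        - Matrix.single (⟨k.1 + 1, by have := k.2; omega⟩, 0) (⟨k.1, by have := k.2; omega⟩, 1) (2 * J))

/-- The transverse-field Ising Hamiltonian
`H_TFIM = −J ∑_{k=1}^{L−1} σ^x_k σ^x_{k+1} − B ∑_{k=1}^{L} σ^z_k` on `(ℂ²)^{⊗L}`. -/
def isingHamiltonian (L : ℕ) (J B : ℝ) : Matrix (Fin L → Fin 2) (Fin L → Fin 2) ℂ :=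
  -((J : ℂ) • ∑ k : Fin (L - 1),
      pauliAt L pauliX ⟨k.1, by have := k.2; omega⟩
        * pauliAt L pauliX ⟨k.1 + 1, by have := k.2; omega⟩)
  - (B : ℂ) • ∑ k : Fin L, pauliAt L pauliZ k


def genOp (L : ℕ) (f : Fin L → Matrix (Fin 2) (Fin 2) ℂ) :
    Matrix (Fin L → Fin 2) (Fin L → Fin 2) ℂ :=
  fun ν μ => ∏ j, f j (ν j) (μ j)

lemma genOp_mul (L : ℕ) (f g : Fin L → Matrix (Fin 2) (Fin 2) ℂ) :
    genOp L f * genOp L g = genOp L (fun j => f j * g j) := by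
  ext ν μ
  calc (genOp L f * genOp L g) ν μ
      = ∑ κ : Fin L → Fin 2, ∏ j, (f j (ν j) (κ j) * g j (κ j) (μ j)) := by
        simp [Matrix.mul_apply, genOp, Finset.prod_mul_distrib]
    _ = ∏ j, ∑ a : Fin 2, f j (ν j) a * g j a (μ j) := by
        rw [Finset.prod_univ_sum]
        simp
    _ = ∏ j, (f j * g j) (ν j) (μ j) := by simp [Matrix.mul_apply]

lemma genOp_one (L : ℕ) : genOp L (fun _ => (1 : Matrix (Fin 2) (Fin 2) ℂ)) = 1 := by
  ext ν μ
  by_cases h : ν = μ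
  · subst h; simp [genOp, Matrix.one_apply]
  · obtain ⟨j₀, hj₀⟩ := Function.ne_iff.mp h
    rw [Matrix.one_apply_ne h]
    exact Finset.prod_eq_zero (Finset.mem_univ j₀) (by simp [Matrix.one_apply, hj₀])

lemma genOp_smul (L : ℕ) (f g : Fin L → Matrix (Fin 2) (Fin 2) ℂ) (k : Fin L) (c : ℂ)
    (hk : f k = c • g k) (h : ∀ j, j ≠ k → f j = g j) :
    genOp L f = c • genOp L g := by
  ext ν μ
  show (∏ j, f j (ν j) (μ j)) = c * ∏ j, g j (ν j) (μ j)
  rw [← Finset.mul_prod_erase Finset.univ (fun j => f j (ν j) (μ j)) (Finset.mem_univ k),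
      ← Finset.mul_prod_erase Finset.univ (fun j => g j (ν j) (μ j)) (Finset.mem_univ k),
      hk]
  have hP : (∏ j ∈ Finset.univ.erase k, f j (ν j) (μ j))
      = ∏ j ∈ Finset.univ.erase k, g j (ν j) (μ j) :=
    Finset.prod_congr rfl fun j hj => by rw [h j (Finset.ne_of_mem_erase hj)]
  rw [hP, Matrix.smul_apply, smul_eq_mul, mul_assoc]

lemma pauliAt_eq_genOp (L : ℕ) (σ : Matrix (Fin 2) (Fin 2) ℂ) (k : Fin L) :
    pauliAt L σ k = genOp L (fun j => if j = k then σ else 1) := by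
  ext ν μ
  refine Finset.prod_congr rfl fun j _ => ?_
  by_cases hj : j = k <;> simp [hj, Matrix.one_apply]

lemma noncommProd_pauliZ (L : ℕ) (s : Finset (Fin L)) :
    s.noncommProd (fun j => pauliAt L pauliZ j) (fun a _ b _ _ => pauliAt_Z_commute L a b)
      = genOp L (fun j => if j ∈ s then pauliZ else 1) := by
  induction s using Finset.induction with
  | empty => exact (Finset.noncommProd_empty _ _).trans (by simpa using (genOp_one L).symm)
  | @insert a s ha ih =>
    refine (Finset.noncommProd_insert_of_notMem _ _ _ _ ha).trans ?_
    rw [ih, pauliAt_eq_genOp, genOp_mul]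
    refine congrArg (genOp L) (funext fun j => ?_)
    by_cases hj : j = a
    · subst hj; simp [ha]
    · by_cases hs : j ∈ s <;> simp [hj, hs]

lemma zString_eq (L : ℕ) (k : Fin L) :
    zString L k = genOp L (fun j => if j < k then pauliZ else 1) := by
  rw [zString, noncommProd_pauliZ]
  refine congrArg (genOp L) (funext fun j => ?_)
  simp [Finset.mem_filter]

lemma X_mul_Y : pauliX * pauliY = Complex.I • pauliZ := by
  ext i j; fin_cases i <;> fin_cases j <;>
    simp [pauliX, pauliY, pauliZ, Matrix.mul_apply, Fin.sum_univ_two]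

lemma Y_mul_X : pauliY * pauliX = (-Complex.I) • pauliZ := by
  ext i j; fin_cases i <;> fin_cases j <;>
    simp [pauliX, pauliY, pauliZ, Matrix.mul_apply, Fin.sum_univ_two]

lemma Y_mul_Z : pauliY * pauliZ = Complex.I • pauliX := by
  ext i j; fin_cases i <;> fin_cases j <;>
    simp [pauliX, pauliY, pauliZ, Matrix.mul_apply, Fin.sum_univ_two]

lemma Z_mul_Y : pauliZ * pauliY = (-Complex.I) • pauliX := by
  ext i j; fin_cases i <;> fin_cases j <;>
    simp [pauliX, pauliY, pauliZ, Matrix.mul_apply, Fin.sum_univ_two]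

lemma Z_mul_Z : pauliZ * pauliZ = 1 := by
  ext i j; fin_cases i <;> fin_cases j <;>
    simp [pauliZ, Matrix.mul_apply, Fin.sum_univ_two, Matrix.one_apply]

lemma jwOdd_eq (L : ℕ) (k : Fin L) :
    jwOdd L k = genOp L (fun j => if j < k then pauliZ else if j = k then pauliX else 1) := by
  rw [jwOdd, zString_eq, pauliAt_eq_genOp, genOp_mul]
  refine congrArg (genOp L) (funext fun j => ?_)
  rcases lt_trichotomy j k with h | h | h
  · simp [h, h.ne]
  · simp [h, lt_irrefl]
  · simp [h.ne', not_lt.mpr h.le]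

lemma jwEven_eq (L : ℕ) (k : Fin L) :
    jwEven L k = genOp L (fun j => if j < k then pauliZ else if j = k then pauliY else 1) := by
  rw [jwEven, zString_eq, pauliAt_eq_genOp, genOp_mul]
  refine congrArg (genOp L) (funext fun j => ?_)
  rcases lt_trichotomy j k with h | h | h
  · simp [h, h.ne]
  · simp [h, lt_irrefl]
  · simp [h.ne', not_lt.mpr h.le]

lemma jwOdd_mul_jwEven (L : ℕ) (k : Fin L) :
    jwOdd L k * jwEven L k = Complex.I • pauliAt L pauliZ k := by
  rw [jwOdd_eq, jwEven_eq, genOp_mul, pauliAt_eq_genOp]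
  refine genOp_smul L _ _ k Complex.I ?_ ?_
  · simp [lt_irrefl, X_mul_Y]
  · intro j hj
    rcases lt_or_gt_of_ne hj with h | h
    · simp [h, hj, Z_mul_Z]
    · simp [hj, not_lt.mpr h.le]

lemma jwEven_mul_jwOdd (L : ℕ) (k : Fin L) :
    jwEven L k * jwOdd L k = (-Complex.I) • pauliAt L pauliZ k := by
  rw [jwOdd_eq, jwEven_eq, genOp_mul, pauliAt_eq_genOp]
  refine genOp_smul L _ _ k (-Complex.I) ?_ ?_
  · simp [lt_irrefl, Y_mul_X]
  · intro j hj
    rcases lt_or_gt_of_ne hj with h | h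
    · simp [h, hj, Z_mul_Z]
    · simp [hj, not_lt.mpr h.le]

lemma jwEven_mul_jwOdd_adj (L : ℕ) (a b : Fin L) (hab : (b : ℕ) = (a : ℕ) + 1) :
    jwEven L a * jwOdd L b
      = Complex.I • (pauliAt L pauliX a * pauliAt L pauliX b) := by
  have hlt : a < b := by rw [Fin.lt_def]; omega
  have hne : a ≠ b := Fin.ne_of_lt hlt
  rw [jwEven_eq, jwOdd_eq, genOp_mul, pauliAt_eq_genOp, pauliAt_eq_genOp, genOp_mul]
  refine genOp_smul L _ _ a Complex.I ?_ ?_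
  · simp [lt_irrefl, hlt, hne, Y_mul_Z]
  · intro j hj
    have hja : (j : ℕ) ≠ (a : ℕ) := fun h => hj (Fin.ext h)
    by_cases hjb : j = b
    · subst hjb
      have h1 : ¬ j < a := by rw [Fin.lt_def]; omega
      simp [h1, hj, lt_irrefl]
    · have hjb' : (j : ℕ) ≠ (b : ℕ) := fun h => hjb (Fin.ext h)
      by_cases hlt2 : j < a
      · have h2 : j < b := by rw [Fin.lt_def] at hlt2 ⊢; omega
        simp [hlt2, h2, hj, hjb, Z_mul_Z]
      · have h2 : ¬ j < b := by
          rw [Fin.lt_def] at hlt2 ⊢; omega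
        simp [hlt2, h2, hj, hjb]

lemma jwOdd_mul_jwEven_adj (L : ℕ) (a b : Fin L) (hab : (b : ℕ) = (a : ℕ) + 1) :
    jwOdd L b * jwEven L a
      = (-Complex.I) • (pauliAt L pauliX a * pauliAt L pauliX b) := by
  have hlt : a < b := by rw [Fin.lt_def]; omega
  have hne : a ≠ b := Fin.ne_of_lt hlt
  rw [jwEven_eq, jwOdd_eq, genOp_mul, pauliAt_eq_genOp, pauliAt_eq_genOp, genOp_mul]
  refine genOp_smul L _ _ a (-Complex.I) ?_ ?_
  · simp [lt_irrefl, hlt, hne, hne.symm, Z_mul_Y]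
  · intro j hj
    have hja : (j : ℕ) ≠ (a : ℕ) := fun h => hj (Fin.ext h)
    by_cases hjb : j = b
    · subst hjb
      have h1 : ¬ j < a := by rw [Fin.lt_def]; omega
      simp [h1, hj, lt_irrefl]
    · have hjb' : (j : ℕ) ≠ (b : ℕ) := fun h => hjb (Fin.ext h)
      by_cases hlt2 : j < a
      · have h2 : j < b := by rw [Fin.lt_def] at hlt2 ⊢; omega
        simp [hlt2, h2, hj, hjb, Z_mul_Z]
      · have h2 : ¬ j < b := by
          rw [Fin.lt_def] at hlt2 ⊢; omega
        simp [hlt2, h2, hj, hjb]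

lemma triple_swap {α β γ : Type*} [Fintype α] [Fintype β] [Fintype γ]
    {M : Type*} [AddCommMonoid M] (f : α → β → γ → M) :
    ∑ p : α, ∑ q : β, ∑ k : γ, f p q k = ∑ k : γ, ∑ p : α, ∑ q : β, f p q k := by
  rw [Finset.sum_congr rfl (fun p _ => Finset.sum_comm (s := Finset.univ)
    (t := Finset.univ) (f := fun q k => f p q k))]
  exact Finset.sum_comm

lemma sum_sum_std {L : ℕ} (a b : Fin L × Fin 2) (c : ℝ)
    (M : Fin L × Fin 2 → Fin L × Fin 2 → Matrix (Fin L → Fin 2) (Fin L → Fin 2) ℂ) :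
    ∑ p : Fin L × Fin 2, ∑ q : Fin L × Fin 2,
        ((Matrix.single a b c p q : ℝ) : ℂ) • M p q = (c : ℂ) • M a b := by
  simp [Matrix.single, ite_and, apply_ite (fun x : ℝ => (x : ℂ)), ite_smul,
    Finset.sum_ite_eq, Finset.sum_ite_eq']

lemma double_sum_expand (L : ℕ) (J B : ℝ)
    (M : Fin L × Fin 2 → Fin L × Fin 2 → Matrix (Fin L → Fin 2) (Fin L → Fin 2) ℂ) :
    ∑ p : Fin L × Fin 2, ∑ q : Fin L × Fin 2, (isingCoupling L J B p q : ℂ) • M p q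
      = (∑ k : Fin L, (((2 * B : ℝ) : ℂ) • M (k, 0) (k, 1)
            - ((2 * B : ℝ) : ℂ) • M (k, 1) (k, 0)))
        + ∑ k : Fin (L - 1),
            (((2 * J : ℝ) : ℂ) • M (⟨k.1, by have := k.2; omega⟩, 1) (⟨k.1 + 1, by have := k.2; omega⟩, 0)
              - ((2 * J : ℝ) : ℂ) • M (⟨k.1 + 1, by have := k.2; omega⟩, 0) (⟨k.1, by have := k.2; omega⟩, 1)) := by
  have step : ∀ p q : Fin L × Fin 2, (isingCoupling L J B p q : ℂ) • M p q
      = (∑ k : Fin L,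
            (((Matrix.single ((k : Fin L), (0 : Fin 2)) (k, 1) (2 * B) p q : ℝ) : ℂ) • M p q
              - ((Matrix.single ((k : Fin L), (1 : Fin 2)) (k, 0) (2 * B) p q : ℝ) : ℂ) • M p q))
        + ∑ k : Fin (L - 1),
            (((Matrix.single ((⟨k.1, by have := k.2; omega⟩ : Fin L), (1 : Fin 2))
                  (⟨k.1 + 1, by have := k.2; omega⟩, 0) (2 * J) p q : ℝ) : ℂ) • M p q
              - ((Matrix.single ((⟨k.1 + 1, by have := k.2; omega⟩ : Fin L), (0 : Fin 2))
                  (⟨k.1, by have := k.2; omega⟩, 1) (2 * J) p q : ℝ) : ℂ) • M p q) := by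
    intro p q
    simp only [isingCoupling, Matrix.add_apply, Matrix.sum_apply, Matrix.sub_apply]
    push_cast
    rw [add_smul, Finset.sum_smul, Finset.sum_smul]
    congr 1 <;> exact Finset.sum_congr rfl fun k _ => by rw [sub_smul]
  simp only [step]
  rw [Finset.sum_congr rfl (fun p (_ : p ∈ Finset.univ) =>
      Finset.sum_congr rfl (fun q (_ : q ∈ Finset.univ) => rfl)),
    Finset.sum_congr rfl (fun p (_ : p ∈ Finset.univ) => Finset.sum_add_distrib),
    Finset.sum_add_distrib]
  congr 1
  · rw [triple_swap (fun p q k => _)]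
    exact Finset.sum_congr rfl fun k _ => by
      rw [Finset.sum_congr rfl (fun p (_ : p ∈ Finset.univ) => Finset.sum_sub_distrib _ _),
        Finset.sum_sub_distrib, sum_sum_std, sum_sum_std]
  · rw [triple_swap (fun p q k => _)]
    exact Finset.sum_congr rfl fun k _ => by
      rw [Finset.sum_congr rfl (fun p (_ : p ∈ Finset.univ) => Finset.sum_sub_distrib _ _),
        Finset.sum_sub_distrib, sum_sum_std, sum_sum_std]

lemma jw_zero (L : ℕ) (k : Fin L) : jw L (k, (0 : Fin 2)) = jwOdd L k := by
  simp [jw]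

lemma jw_one (L : ℕ) (k : Fin L) : jw L (k, (1 : Fin 2)) = jwEven L k := by
  simp [jw]

/-!
**Statement 10** (Jordan–Wigner form of the transverse-field Ising model).
`H_TFIM = (i/4) ∑_{j,k=1}^{2L} A(J,B)_{j,k} m_j m_k`.
-/


theorem ising_eq_quadratic_majorana (L : ℕ) (J B : ℝ) :
    isingHamiltonian L J B
      = (Complex.I / 4) •
          ∑ p : Fin L × Fin 2, ∑ q : Fin L × Fin 2,
            (isingCoupling L J B p q : ℂ) • (jw L p * jw L q) := by
  rw [double_sum_expand L J B (fun p q => jw L p * jw L q)]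
  have hadj1 : ∀ k : Fin (L - 1),
      jwEven L ⟨k.1, by have := k.2; omega⟩ * jwOdd L ⟨k.1 + 1, by have := k.2; omega⟩
        = Complex.I • (pauliAt L pauliX ⟨k.1, by have := k.2; omega⟩
            * pauliAt L pauliX ⟨k.1 + 1, by have := k.2; omega⟩) :=
    fun k => jwEven_mul_jwOdd_adj L _ _ rfl
  have hadj2 : ∀ k : Fin (L - 1),
      jwOdd L ⟨k.1 + 1, by have := k.2; omega⟩ * jwEven L ⟨k.1, by have := k.2; omega⟩
        = (-Complex.I) • (pauliAt L pauliX ⟨k.1, by have := k.2; omega⟩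
            * pauliAt L pauliX ⟨k.1 + 1, by have := k.2; omega⟩) :=
    fun k => jwOdd_mul_jwEven_adj L _ _ rfl
  simp only [jw_zero, jw_one, jwOdd_mul_jwEven, jwEven_mul_jwOdd, hadj1, hadj2]
  simp only [smul_smul, ← sub_smul]
  rw [← Finset.smul_sum, ← Finset.smul_sum, isingHamiltonian]
  rw [smul_add, smul_smul, smul_smul, sub_eq_add_neg, ← neg_smul, ← neg_smul, add_comm]
  congr 1
  · congr 1
    push_cast
    linear_combination (-(B : ℂ)) * Complex.I_sq
  · congr 1
    push_cast
    linear_combination (-(J : ℂ)) * Complex.I_sq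

end
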